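/- arXiv:1407.7941 — 9 statements merged into one kernel-verified Lean document; each statement's English description precedes it below -/
import Mathlib

section
/- If q ≠ conj(q), then q^n = (q^n + conj(q)^n)/2 + ((q^n - conj(q)^n)/(q - conj(q))) · (q1 i + q2 j + q3 k), where q = q0 + q1 i + q2 j + q3 k. -/
open Quaternion

theorem quaternion_pow_decomposition (q : Quaternion ℝ) (hq : q ≠ star q) (n : ℕ) :
    q ^ n = (q ^ n + (star q) ^ n) / 2 +
      ((q ^ n - (star q) ^ n) * (q - star q)⁻¹) * q.im := by
  have h : q - star q ≠ 0 := sub_ne_zero.mpr hq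
  have e2 : ((2 : ℝ) : Quaternion ℝ) = 2 := by norm_cast
  have h2 : (2 : Quaternion ℝ) ≠ 0 := by
    rw [← e2]
    simpa using Quaternion.coe_injective.ne (two_ne_zero (α := ℝ))
  have hsub : q - star q = (q.im : Quaternion ℝ) + q.im := by
    ext <;> simp
  have him : (q.im : Quaternion ℝ) = (q - star q) / 2 := by
    rw [eq_div_iff h2, hsub, mul_two]
  rw [him, div_eq_mul_inv, div_eq_mul_inv, mul_assoc,
    ← mul_assoc (q - star q)⁻¹, inv_mul_cancel₀ h, one_mul, ← add_mul]
  have key : q ^ n + star q ^ n + (q ^ n - star q ^ n) = 2 * q ^ n := by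
    noncomm_ring
  have c : Commute (2 : Quaternion ℝ) (q ^ n) := by
    simpa using Nat.cast_commute 2 (q ^ n)
  rw [key, c.eq, mul_assoc, mul_inv_cancel₀ h2, mul_one]
end

section
/- Along the quaternion differential equation q' = a(c0 q - q^n) with c0 ∈ ℝ, the real polynomial S(q) = q^{n-1} + conj(q)^{n-1} - c0 satisfies dS/dt = (n-1)·(a q^{n-1}(c0 - q^{n-1}) + (c0 - conj(q)^{n-1}) conj(q)^{n-1} conj(a)); that is, for any quaternion q, the sum over l = 0..n-2 of (q^l a (c0 q - q^n) q^{n-2-l} + conj(q)^{n-2-l} conj(c0 q - q^n) conj(a) conj(q)^l) equals (n-1)(a q^{n-1}(c0 - q^{n-1}) + (c0 - conj(q)^{n-1}) conj(q)^{n-1} conj(a)). -/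
open Quaternion Finset

lemma re_mul_comm (p q : Quaternion ℝ) : (p * q).re = (q * p).re := by
  simp only [Quaternion.re_mul]; ring

/-- Derivative of `S(q) = q^{n-1} + conj(q)^{n-1} - c0` along `q' = a (c0 q - q^n)`. -/
theorem quaternion_S_derivative (a : Quaternion ℝ) (c0 : ℝ) (n : ℕ) (hn : 2 ≤ n)
    (q : Quaternion ℝ) :
    ∑ l ∈ Finset.range (n - 1),
        (q ^ l * (a * ((c0 : Quaternion ℝ) * q - q ^ n)) * q ^ (n - 2 - l) +
          (star q) ^ (n - 2 - l) * star (a * ((c0 : Quaternion ℝ) * q - q ^ n)) *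
            (star q) ^ l) =
      (n - 1 : ℕ) •
        (a * q ^ (n - 1) * ((c0 : Quaternion ℝ) - q ^ (n - 1)) +
          ((c0 : Quaternion ℝ) - (star q) ^ (n - 1)) * (star q) ^ (n - 1) * star a) := by
  set f : Quaternion ℝ := a * ((c0 : Quaternion ℝ) * q - q ^ n) with hf
  set y : Quaternion ℝ := a * q ^ (n - 1) * ((c0 : Quaternion ℝ) - q ^ (n - 1)) with hy
  have hstar : ((c0 : Quaternion ℝ) - (star q) ^ (n - 1)) * (star q) ^ (n - 1) * star a
      = star y := by
    simp [hy, star_sub, mul_sub, sub_mul, star_mul, mul_assoc]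
  rw [hstar]
  have hre : ∀ l ∈ Finset.range (n - 1),
      q ^ l * f * q ^ (n - 2 - l) + (star q) ^ (n - 2 - l) * star f * (star q) ^ l
        = y + star y := by
    intro l hl
    rw [Finset.mem_range] at hl
    have h1 : (star q) ^ (n - 2 - l) * star f * (star q) ^ l
        = star (q ^ l * f * q ^ (n - 2 - l)) := by
      simp [star_mul, mul_assoc]
    rw [h1, Quaternion.self_add_star', Quaternion.self_add_star' (a := y)]
    congr 2
    have h2 : (q ^ l * f * q ^ (n - 2 - l)).re = (f * (q ^ (n - 2 - l) * q ^ l)).re := by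
      rw [re_mul_comm, ← mul_assoc, re_mul_comm, mul_assoc]
    rw [h2, ← pow_add]
    have hlle : n - 2 - l + l = n - 2 := by omega
    rw [hlle]
    have hfq : f * q ^ (n - 2) = y := by
      have h3 : ((c0 : Quaternion ℝ) * q - q ^ n) * q ^ (n - 2)
          = q ^ (n - 1) * ((c0 : Quaternion ℝ) - q ^ (n - 1)) := by
        rw [sub_mul, mul_sub]
        congr 1
        · rw [mul_assoc, ← pow_succ']
          have : n - 2 + 1 = n - 1 := by omega
          rw [this]; exact Quaternion.coe_commutes c0 _
        · rw [← pow_add, ← pow_add]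
          congr 1
          omega
      rw [hf, hy, mul_assoc, h3, mul_assoc]
    rw [hfq]
  rw [Finset.sum_congr rfl hre, Finset.sum_const, Finset.card_range]
end

section
/- If a ∈ H is purely imaginary (a + conj(a) = 0), then along the quaternion ODE q' = a(c0 q - q^n) with c0 ∈ ℝ the function H(q) = (q conj(q))^{n-1} / (q^{n-1} + conj(q)^{n-1} - c0) is a first integral: at every point where the denominator is nonzero, the derivative of H along the vector field vanishes. More generally, dH/dt = (n-1)(a + conj(a))(c0 - H)H. -/
open Quaternion Finset

noncomputable instance : StarModule ℝ (Quaternion ℝ) := ⟨Quaternion.star_smul⟩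

noncomputable def Dpow (m : ℕ) (q : Quaternion ℝ) : Quaternion ℝ →L[ℝ] Quaternion ℝ :=
  ∑ i ∈ Finset.range m, ContinuousLinearMap.mulLeftRight ℝ (Quaternion ℝ) (q ^ i) (q ^ (m - 1 - i))

theorem hasFDerivAt_qpow (m : ℕ) (q : Quaternion ℝ) :
    HasFDerivAt (fun x : Quaternion ℝ => x ^ m) (Dpow m q) q := by
  induction m with
  | zero => simpa [Dpow] using hasFDerivAt_const (1 : Quaternion ℝ) q
  | succ m ih =>
      have h := ih.mul' (hasFDerivAt_id q)
      have e : ∀ x : Quaternion ℝ, x ^ m * x = x ^ (m+1) := fun x => (pow_succ x m).symm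
      simp only [e, id_eq] at h
      have heq : (q ^ m • ContinuousLinearMap.id ℝ (Quaternion ℝ) + (Dpow m q).smulRight q)
          = Dpow (m+1) q := by
        refine ContinuousLinearMap.ext fun v => ?_
        simp only [Dpow, ContinuousLinearMap.sum_apply, ContinuousLinearMap.mulLeftRight_apply,
          ContinuousLinearMap.add_apply, ContinuousLinearMap.smul_apply,
          ContinuousLinearMap.smulRight_apply, ContinuousLinearMap.coe_id', id_eq, smul_eq_mul,
          Finset.sum_mul, Finset.sum_range_succ]
        rw [add_comm]
        congr 1
        · refine Finset.sum_congr rfl fun i hi => ?_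
          rw [Finset.mem_range] at hi
          rw [mul_assoc, ← pow_succ]
          congr 2
          omega
        · simp
      have hmap : (Dpow m q).smulRight q = MulOpposite.op q • Dpow m q := by
        refine ContinuousLinearMap.ext fun v => ?_; simp
      have hfun : ((fun x : Quaternion ℝ => x ^ m) * id) = fun x => x ^ (m+1) := by
        funext x; simp [pow_succ]
      rw [← hmap, heq, hfun] at h
      exact h

lemma re_cyc (x y : Quaternion ℝ) : (x * y).re = (y * x).re := by
  simp [Quaternion.re_mul]; ring

noncomputable def reCLM : Quaternion ℝ →L[ℝ] ℝ :=
  LinearMap.toContinuousLinearMap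
    { toFun := QuaternionAlgebra.re
      map_add' := by intro x y; simp
      map_smul' := by intro r x; simp }

@[simp] lemma reCLM_apply (x : Quaternion ℝ) : reCLM x = x.re := rfl

lemma re_Dpow (m : ℕ) (q v : Quaternion ℝ) :
    (Dpow m q v).re = m * (q ^ (m - 1) * v).re := by
  rw [Dpow]
  simp only [ContinuousLinearMap.sum_apply, ContinuousLinearMap.mulLeftRight_apply]
  rw [← reCLM_apply, map_sum]
  have h : ∀ i ∈ Finset.range m, reCLM (q ^ i * v * q ^ (m - 1 - i)) = (q ^ (m-1) * v).re := by
    intro i hi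
    rw [Finset.mem_range] at hi
    rw [reCLM_apply, re_cyc, ← mul_assoc, ← pow_add]
    congr 3
    omega
  rw [Finset.sum_congr rfl h, Finset.sum_const, Finset.card_range, nsmul_eq_mul]

lemma sq_eq (x : Quaternion ℝ) : x ^ 2 = ((2 * x.re : ℝ) : Quaternion ℝ) * x - ((normSq x : ℝ) : Quaternion ℝ) := by
  have h1 := x.self_add_star'
  have h2 := x.star_mul_self
  rw [← h1, ← h2]
  noncomm_ring

example : True := trivial

lemma re_mul_coe (x : Quaternion ℝ) (r : ℝ) : (x * (r : Quaternion ℝ)).re = r * x.re := by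
  rw [← Quaternion.coe_commutes, Quaternion.coe_mul_eq_smul]
  simp [Quaternion.re_smul]

lemma re_cmul (r : ℝ) (x y : Quaternion ℝ) :
    (x * ((r : Quaternion ℝ) * y)).re = r * (x * y).re := by
  rw [← mul_assoc, ← Quaternion.coe_commutes, mul_assoc, Quaternion.coe_mul_eq_smul]
  simp [Quaternion.re_smul]

set_option maxHeartbeats 2000000 in
/-- Along `q' = a(c0 q - q^n)`, the function
`H(q) = (q conj q)^{n-1} / (q^{n-1} + conj(q)^{n-1} - c0)` satisfies
`dH/dt = (n-1)(a + conj a)(c0 - H) H`; in particular if `a + conj a = 0`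
then `H` is a first integral. -/
theorem quaternion_H_first_integral (a : Quaternion ℝ) (c0 : ℝ) (n : ℕ) (hn : 2 ≤ n)
    (H : Quaternion ℝ → ℝ)
    (hH : H = fun q => ((q * star q).re) ^ (n - 1) /
      ((q ^ (n - 1) + (star q) ^ (n - 1)).re - c0))
    (q : Quaternion ℝ)
    (hden : (q ^ (n - 1) + (star q) ^ (n - 1)).re - c0 ≠ 0) :
    fderiv ℝ H q (a * ((c0 : Quaternion ℝ) * q - q ^ n)) =
      ((n : ℝ) - 1) * (a + star a).re * (c0 - H q) * H q ∧
      (a + star a = 0 → fderiv ℝ H q (a * ((c0 : Quaternion ℝ) * q - q ^ n)) = 0) := by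
  obtain ⟨m, rfl⟩ : ∃ m, n = m + 1 := ⟨n - 1, by omega⟩
  have hm : 1 ≤ m := by omega
  have hm1 : m + 1 - 1 = m := by omega
  rw [hm1] at hH hden
  set S : Quaternion ℝ →L[ℝ] Quaternion ℝ :=
    ((starL' ℝ : Quaternion ℝ ≃L[ℝ] Quaternion ℝ) : Quaternion ℝ →L[ℝ] Quaternion ℝ) with hS
  have hstar : HasFDerivAt (fun x : Quaternion ℝ => star x) S q := by
    simpa using (hasFDerivAt_id q).star
  -- derivative of N(x) = (x * star x).re
  set LN : Quaternion ℝ →L[ℝ] ℝ :=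
    reCLM.comp (q • S + (ContinuousLinearMap.id ℝ (Quaternion ℝ)).smulRight (star q)) with hLN
  have hN : HasFDerivAt (fun x : Quaternion ℝ => (x * star x).re) LN q := by
    have h := (hasFDerivAt_id q).mul' hstar
    simp only [id_eq] at h
    have h2 := reCLM.hasFDerivAt.comp q h
    have hmap : (ContinuousLinearMap.id ℝ (Quaternion ℝ)).smulRight (star q)
        = MulOpposite.op (star q) • ContinuousLinearMap.id ℝ (Quaternion ℝ) := by
      refine ContinuousLinearMap.ext fun v => ?_; simp
    rw [hLN, hmap]
    exact h2
  -- derivative of D(x) = (x^m + (star x)^m).re - c0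
  set LD : Quaternion ℝ →L[ℝ] ℝ :=
    reCLM.comp (Dpow m q + (Dpow m (star q)).comp S) with hLDdef
  have hD : HasFDerivAt (fun x : Quaternion ℝ => (x ^ m + (star x) ^ m).re - c0) LD q := by
    have h1 := hasFDerivAt_qpow m q
    have h2 := (hasFDerivAt_qpow m (star q)).comp q hstar
    have h := (reCLM.hasFDerivAt.comp q (h1.add h2)).sub_const c0
    exact h
  have hden' : ((q ^ m + (star q) ^ m).re - c0) ≠ 0 := hden
  have hNpow : HasFDerivAt (fun x : Quaternion ℝ => ((x * star x).re) ^ m)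
      (((m : ℝ) * ((q * star q).re) ^ (m - 1)) • LN) q :=
    (hasDerivAt_pow m _).comp_hasFDerivAt q hN
  have hinv : HasFDerivAt (fun x : Quaternion ℝ => (((x ^ m + (star x) ^ m).re - c0))⁻¹)
      ((-(((q ^ m + (star q) ^ m).re - c0) ^ 2)⁻¹) • LD) q :=
    (hasDerivAt_inv hden').comp_hasFDerivAt q hD
  have hHder : HasFDerivAt H
      ((((q * star q).re) ^ m) • ((-(((q ^ m + (star q) ^ m).re - c0) ^ 2)⁻¹) • LD)
        + (((q ^ m + (star q) ^ m).re - c0))⁻¹ • (((m : ℝ) * ((q * star q).re) ^ (m - 1)) • LN)) q := by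
    rw [hH]
    simp only [div_eq_mul_inv]
    exact hNpow.mul hinv
  set v : Quaternion ℝ := a * ((c0 : Quaternion ℝ) * q - q ^ (m + 1)) with hv
  -- value of LN at v
  have e1 : LN v = (q * star v).re + (v * star q).re := by
    simp [hLN, hS, Quaternion.re_add, smul_eq_mul]
  have e2 : (q * star v).re = (v * star q).re := by
    simp [Quaternion.re_mul]
    ring
  have e3 : v * star q = a * (((c0 * normSq q : ℝ) : Quaternion ℝ)
      - q ^ m * ((normSq q : ℝ) : Quaternion ℝ)) := by
    rw [hv, mul_assoc]
    congr 1
    rw [sub_mul, mul_assoc, self_mul_star, pow_succ, mul_assoc, self_mul_star,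
      ← Quaternion.coe_mul]
  have hLNv : LN v = 2 * (c0 * normSq q * a.re - normSq q * (a * q ^ m).re) := by
    rw [e1, e2, e3, mul_sub, Quaternion.re_sub, re_mul_coe, ← mul_assoc, re_mul_coe]
    ring
  -- value of LD at v
  have e4 : LD v = (Dpow m q v).re + (Dpow m (star q) (star v)).re := by
    simp [hLDdef, hS, Quaternion.re_add]
  have e5 : ((star q) ^ (m - 1) * star v).re = (q ^ (m - 1) * v).re := by
    rw [← star_pow, ← star_mul, Quaternion.re_star, re_cyc]
  have e6 : v * q ^ (m - 1) = a * ((c0 : Quaternion ℝ) * q ^ m - q ^ (2 * m)) := by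
    rw [hv, mul_assoc]
    congr 1
    have h1 : q * q ^ (m - 1) = q ^ m := by rw [← pow_succ']; congr 1; omega
    have h2 : q ^ (m + 1) * q ^ (m - 1) = q ^ (2 * m) := by rw [← pow_add]; congr 1; omega
    rw [sub_mul, mul_assoc, h1, h2]
  have e7 : (q ^ (m - 1) * v).re = c0 * (a * q ^ m).re - (a * q ^ (2 * m)).re := by
    rw [re_cyc, e6, mul_sub, Quaternion.re_sub, re_cmul]
  have hLDv : LD v = 2 * m * (c0 * (a * q ^ m).re - (a * q ^ (2 * m)).re) := by
    rw [e4, re_Dpow, re_Dpow, e5, e7]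
    ring
  -- key identity
  have hKI : (a * q ^ (2 * m)).re
      = 2 * (q ^ m).re * (a * q ^ m).re - normSq q ^ m * a.re := by
    rw [show (2:ℕ) * m = m * 2 from mul_comm 2 m, pow_mul, sq_eq (q ^ m), mul_sub,
      Quaternion.re_sub, re_cmul, re_mul_coe, map_pow]
  -- values of N and D at q
  have hNq : (q * star q).re = normSq q := (normSq_def q).symm
  have hDq : (q ^ m + (star q) ^ m).re = 2 * (q ^ m).re := by
    rw [Quaternion.re_add, ← star_pow, Quaternion.re_star]
    ring
  have happ : fderiv ℝ H q v =
      ((q * star q).re) ^ m * (-((((q ^ m + (star q) ^ m).re - c0)) ^ 2)⁻¹ * LD v)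
      + (((q ^ m + (star q) ^ m).re - c0))⁻¹ * ((m : ℝ) * ((q * star q).re) ^ (m - 1) * LN v) := by
    rw [hHder.fderiv]
    simp only [ContinuousLinearMap.add_apply, ContinuousLinearMap.smul_apply, smul_eq_mul,
      neg_mul, mul_neg, neg_neg]
  have hsum : (a + star a).re = 2 * a.re := by
    simp [Quaternion.re_add]
    ring
  have hden2 : 2 * (q ^ m).re - c0 ≠ 0 := by rwa [hDq] at hden'
  have hfst : fderiv ℝ H q v = (((m + 1 : ℕ) : ℝ) - 1) * (a + star a).re * (c0 - H q) * H q := by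
    rw [happ, hLNv, hLDv, hKI, hNq, hDq, hsum, hH]
    simp only [hNq, hDq]
    clear hHder hNpow hinv hN hD hstar e1 e2 e3 e4 e5 e6 e7 hLNv hLDv hKI happ hsum
    clear hLN hLDdef hS hv
    clear LN LD S v
    push_cast
    obtain ⟨k, rfl⟩ : ∃ k, m = k + 1 := ⟨m - 1, by omega⟩
    simp only [Nat.add_sub_cancel]
    push_cast
    generalize (q ^ (k + 1)).re = r at hden2 ⊢
    generalize (a * q ^ (k + 1)).re = P
    generalize Quaternion.normSq q = Nq
    generalize a.re = R
    clear hH hden hden' hDq hNq hm hm1 hn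
    clear H q a
    field_simp [hden2]
    ring
  exact ⟨hfst, fun h0 => by rw [hfst, h0]; simp⟩
end

section
/- Consider the vector field on ℝ^4: q0' = (2q0 - c0) q1, q1' = c0 q0 - q0^2 + q1^2 + q2^2 + q3^2, q2' = (2q0 - c0) q3, q3' = -(2q0 - c0) q2, with c0 ∈ ℝ. Then H(q) = (q0^2 + q1^2 + q2^2 + q3^2)/(2q0 - c0) is a first integral on the open set where 2q0 ≠ c0. -/
/-- `H = (q0²+q1²+q2²+q3²)/(2q0 - c0)` is a first integral of the component
form of `q' = i(c0 q - q²)` on the open set `2q0 ≠ c0`. -/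
theorem H_first_integral_n2 (c0 : ℝ)
    (V : ℝ × ℝ × ℝ × ℝ → ℝ × ℝ × ℝ × ℝ)
    (hV : V = fun p =>
      ((2 * p.1 - c0) * p.2.1,
       c0 * p.1 - p.1 ^ 2 + p.2.1 ^ 2 + p.2.2.1 ^ 2 + p.2.2.2 ^ 2,
       (2 * p.1 - c0) * p.2.2.2,
       -(2 * p.1 - c0) * p.2.2.1))
    (H : ℝ × ℝ × ℝ × ℝ → ℝ)
    (hH : H = fun p =>
      (p.1 ^ 2 + p.2.1 ^ 2 + p.2.2.1 ^ 2 + p.2.2.2 ^ 2) / (2 * p.1 - c0))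
    (p : ℝ × ℝ × ℝ × ℝ) (hp : 2 * p.1 ≠ c0) :
    fderiv ℝ H p (V p) = 0 := by
  have hD : 2 * p.1 - c0 ≠ 0 := sub_ne_zero.mpr hp
  have h0 : HasFDerivAt (fun q : ℝ × ℝ × ℝ × ℝ => q.1)
      (ContinuousLinearMap.fst ℝ ℝ (ℝ × ℝ × ℝ)) p := hasFDerivAt_fst
  have h1 : HasFDerivAt (fun q : ℝ × ℝ × ℝ × ℝ => q.2.1)
      ((ContinuousLinearMap.fst ℝ ℝ (ℝ × ℝ)).comp
        (ContinuousLinearMap.snd ℝ ℝ (ℝ × ℝ × ℝ))) p :=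
    hasFDerivAt_fst.comp p hasFDerivAt_snd
  have h2 : HasFDerivAt (fun q : ℝ × ℝ × ℝ × ℝ => q.2.2.1)
      ((ContinuousLinearMap.fst ℝ ℝ ℝ).comp
        ((ContinuousLinearMap.snd ℝ ℝ (ℝ × ℝ)).comp
          (ContinuousLinearMap.snd ℝ ℝ (ℝ × ℝ × ℝ)))) p :=
    hasFDerivAt_fst.comp p (hasFDerivAt_snd.comp p hasFDerivAt_snd)
  have h3 : HasFDerivAt (fun q : ℝ × ℝ × ℝ × ℝ => q.2.2.2)
      ((ContinuousLinearMap.snd ℝ ℝ ℝ).comp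
        ((ContinuousLinearMap.snd ℝ ℝ (ℝ × ℝ)).comp
          (ContinuousLinearMap.snd ℝ ℝ (ℝ × ℝ × ℝ)))) p :=
    hasFDerivAt_snd.comp p (hasFDerivAt_snd.comp p hasFDerivAt_snd)
  have hN : HasFDerivAt
      (fun q : ℝ × ℝ × ℝ × ℝ => q.1 * q.1 + q.2.1 * q.2.1 + q.2.2.1 * q.2.2.1 + q.2.2.2 * q.2.2.2)
      _ p := (((h0.mul h0).add (h1.mul h1)).add (h2.mul h2)).add (h3.mul h3)
  have hDen : HasFDerivAt (fun q : ℝ × ℝ × ℝ × ℝ => 2 * q.1 - c0)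
      _ p := ((h0.const_mul 2).sub_const c0)
  have hInv : HasFDerivAt (fun q : ℝ × ℝ × ℝ × ℝ => (2 * q.1 - c0)⁻¹) _ p :=
    (hasFDerivAt_inv hD).comp p hDen
  have hHd : HasFDerivAt (fun q : ℝ × ℝ × ℝ × ℝ =>
      (q.1 * q.1 + q.2.1 * q.2.1 + q.2.2.1 * q.2.2.1 + q.2.2.2 * q.2.2.2) *
        (2 * q.1 - c0)⁻¹) _ p := hN.mul hInv
  have hEq : H = fun q : ℝ × ℝ × ℝ × ℝ =>
      (q.1 * q.1 + q.2.1 * q.2.1 + q.2.2.1 * q.2.2.1 + q.2.2.2 * q.2.2.2) *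
        (2 * q.1 - c0)⁻¹ := by
    rw [hH]; funext q; rw [div_eq_mul_inv]; ring_nf
  rw [hEq, hV]
  rw [hHd.fderiv]
  simp only [ContinuousLinearMap.smul_apply, ContinuousLinearMap.sub_apply,
    ContinuousLinearMap.add_apply, ContinuousLinearMap.comp_apply,
    ContinuousLinearMap.coe_fst', ContinuousLinearMap.coe_snd',
    ContinuousLinearMap.smulRight_apply, ContinuousLinearMap.one_apply,
    ContinuousLinearMap.toSpanSingleton_apply, smul_eq_mul]
  field_simp
  ring
end

section
/- Consider the vector field on ℝ^4: q0' = -(c0 - 3q0^2 + q1^2 + q2^2 + q3^2) q1, q1' = (c0 - q0^2 + 3q1^2 + 3q2^2 + 3q3^2) q0, q2' = -(c0 - 3q0^2 + q1^2 + q2^2 + q3^2) q3, q3' = (c0 - 3q0^2 + q1^2 + q2^2 + q3^2) q2. Then H(q) = (q0^2+q1^2+q2^2+q3^2)^2 / (2(q0^2 - q1^2 - q2^2 - q3^2) - c0) and F(q) = q2^2 + q3^2 are both first integrals on the open set where 2(q0^2 - q1^2 - q2^2 - q3^2) ≠ c0. -/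
/-- `H` and `F` are first integrals of the component form of
`q' = i(c0 q - q³)` on the open set `2(q0²-q1²-q2²-q3²) ≠ c0`. -/
theorem HF_first_integrals_n3 (c0 : ℝ)
    (V : ℝ × ℝ × ℝ × ℝ → ℝ × ℝ × ℝ × ℝ)
    (hV : V = fun p =>
      (-(c0 - 3 * p.1 ^ 2 + p.2.1 ^ 2 + p.2.2.1 ^ 2 + p.2.2.2 ^ 2) * p.2.1,
       (c0 - p.1 ^ 2 + 3 * p.2.1 ^ 2 + 3 * p.2.2.1 ^ 2 + 3 * p.2.2.2 ^ 2) * p.1,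
       -(c0 - 3 * p.1 ^ 2 + p.2.1 ^ 2 + p.2.2.1 ^ 2 + p.2.2.2 ^ 2) * p.2.2.2,
       (c0 - 3 * p.1 ^ 2 + p.2.1 ^ 2 + p.2.2.1 ^ 2 + p.2.2.2 ^ 2) * p.2.2.1))
    (H F : ℝ × ℝ × ℝ × ℝ → ℝ)
    (hH : H = fun p =>
      (p.1 ^ 2 + p.2.1 ^ 2 + p.2.2.1 ^ 2 + p.2.2.2 ^ 2) ^ 2 /
        (2 * (p.1 ^ 2 - p.2.1 ^ 2 - p.2.2.1 ^ 2 - p.2.2.2 ^ 2) - c0))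
    (hF : F = fun p => p.2.2.1 ^ 2 + p.2.2.2 ^ 2)
    (p : ℝ × ℝ × ℝ × ℝ)
    (hp : 2 * (p.1 ^ 2 - p.2.1 ^ 2 - p.2.2.1 ^ 2 - p.2.2.2 ^ 2) ≠ c0) :
    fderiv ℝ H p (V p) = 0 ∧ fderiv ℝ F p (V p) = 0 := by
  subst hV hH hF
  have hD0 : 2 * (p.1 ^ 2 - p.2.1 ^ 2 - p.2.2.1 ^ 2 - p.2.2.2 ^ 2) - c0 ≠ 0 :=
    sub_ne_zero_of_ne hp
  -- coordinate projections
  have hx : HasFDerivAt (fun q : ℝ × ℝ × ℝ × ℝ => q.1)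
      (ContinuousLinearMap.fst ℝ ℝ (ℝ × ℝ × ℝ)) p := hasFDerivAt_fst
  have hy : HasFDerivAt (fun q : ℝ × ℝ × ℝ × ℝ => q.2.1)
      ((ContinuousLinearMap.fst ℝ ℝ (ℝ × ℝ)).comp
        (ContinuousLinearMap.snd ℝ ℝ (ℝ × ℝ × ℝ))) p :=
    hasFDerivAt_fst.comp p hasFDerivAt_snd
  have hz : HasFDerivAt (fun q : ℝ × ℝ × ℝ × ℝ => q.2.2.1)
      ((ContinuousLinearMap.fst ℝ ℝ ℝ).comp
        ((ContinuousLinearMap.snd ℝ ℝ (ℝ × ℝ)).comp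
          (ContinuousLinearMap.snd ℝ ℝ (ℝ × ℝ × ℝ)))) p :=
    hasFDerivAt_fst.comp p (hasFDerivAt_snd.comp p hasFDerivAt_snd)
  have hw : HasFDerivAt (fun q : ℝ × ℝ × ℝ × ℝ => q.2.2.2)
      ((ContinuousLinearMap.snd ℝ ℝ ℝ).comp
        ((ContinuousLinearMap.snd ℝ ℝ (ℝ × ℝ)).comp
          (ContinuousLinearMap.snd ℝ ℝ (ℝ × ℝ × ℝ)))) p :=
    hasFDerivAt_snd.comp p (hasFDerivAt_snd.comp p hasFDerivAt_snd)
  -- squares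
  have hx2 := hx.mul hx
  have hy2 := hy.mul hy
  have hz2 := hz.mul hz
  have hw2 := hw.mul hw
  simp only [← sq] at hx2 hy2 hz2 hw2
  -- numerator
  have hN := ((hx2.add hy2).add hz2).add hw2
  have hN2 := hN.mul hN
  simp only [← sq] at hN2
  -- denominator
  have hD := ((((hx2.sub hy2).sub hz2).sub hw2).const_mul (2 : ℝ)).sub
    (hasFDerivAt_const c0 p)
  have hDinv := (hasFDerivAt_inv hD0).comp p hD
  have hHd := hN2.mul hDinv
  simp only [Function.comp_def] at hHd
  have hFd := hz2.add hw2
  constructor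
  · have heq : (fun q : ℝ × ℝ × ℝ × ℝ =>
        (q.1 ^ 2 + q.2.1 ^ 2 + q.2.2.1 ^ 2 + q.2.2.2 ^ 2) ^ 2 /
          (2 * (q.1 ^ 2 - q.2.1 ^ 2 - q.2.2.1 ^ 2 - q.2.2.2 ^ 2) - c0)) =
        (fun q : ℝ × ℝ × ℝ × ℝ =>
        (q.1 ^ 2 + q.2.1 ^ 2 + q.2.2.1 ^ 2 + q.2.2.2 ^ 2) ^ 2 *
          (2 * (q.1 ^ 2 - q.2.1 ^ 2 - q.2.2.1 ^ 2 - q.2.2.2 ^ 2) - c0)⁻¹) := by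
      funext q; rw [div_eq_mul_inv]
    rw [heq]; erw [hHd.fderiv]
    simp only [ContinuousLinearMap.add_apply, ContinuousLinearMap.smul_apply,
      ContinuousLinearMap.comp_apply, ContinuousLinearMap.coe_fst',
      ContinuousLinearMap.coe_snd', ContinuousLinearMap.sub_apply,
      ContinuousLinearMap.smulRight_apply, ContinuousLinearMap.one_apply,
      ContinuousLinearMap.zero_apply, smul_eq_mul,
      ContinuousLinearMap.toSpanSingleton_apply, Pi.add_apply, Pi.sub_apply, Pi.pow_apply]
    field_simp
    ring
  · erw [hFd.fderiv]
    simp only [ContinuousLinearMap.add_apply, ContinuousLinearMap.smul_apply,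
      ContinuousLinearMap.comp_apply, ContinuousLinearMap.coe_fst',
      ContinuousLinearMap.coe_snd', smul_eq_mul]
    ring
end

section
/- Consider the vector field on ℝ^4: q0' = c0 q0 - c1 q1 - q0^2 + q1^2 + q2^2 + q3^2, q1' = c1 q0 + (c0 - 2q0) q1, q2' = (c0 - 2q0) q2 - c1 q3, q3' = c1 q2 + (c0 - 2q0) q3. If c0 = 0, then H(q) = (q0^2+q1^2+q2^2+q3^2)/(2c0 q0 + 2c1 q1 - c0^2 - c1^2) is a first integral on the set where the denominator is nonzero. -/
/-- For the component form of `q' = (c0 + c1 i) q - q²` with `c0 = 0`,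
`H = (q0²+q1²+q2²+q3²)/(2c0 q0 + 2c1 q1 - c0² - c1²)` is a first integral
where the denominator is nonzero. -/
theorem H_first_integral_riccati (c0 c1 : ℝ) (hc0 : c0 = 0)
    (V : ℝ × ℝ × ℝ × ℝ → ℝ × ℝ × ℝ × ℝ)
    (hV : V = fun p =>
      (c0 * p.1 - c1 * p.2.1 - p.1 ^ 2 + p.2.1 ^ 2 + p.2.2.1 ^ 2 + p.2.2.2 ^ 2,
       c1 * p.1 + (c0 - 2 * p.1) * p.2.1,
       (c0 - 2 * p.1) * p.2.2.1 - c1 * p.2.2.2,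
       c1 * p.2.2.1 + (c0 - 2 * p.1) * p.2.2.2))
    (H : ℝ × ℝ × ℝ × ℝ → ℝ)
    (hH : H = fun p =>
      (p.1 ^ 2 + p.2.1 ^ 2 + p.2.2.1 ^ 2 + p.2.2.2 ^ 2) /
        (2 * c0 * p.1 + 2 * c1 * p.2.1 - c0 ^ 2 - c1 ^ 2))
    (p : ℝ × ℝ × ℝ × ℝ)
    (hp : 2 * c0 * p.1 + 2 * c1 * p.2.1 - c0 ^ 2 - c1 ^ 2 ≠ 0) :
    fderiv ℝ H p (V p) = 0 := by
  have hx : HasFDerivAt (fun q : ℝ × ℝ × ℝ × ℝ => q.1)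
      (ContinuousLinearMap.fst ℝ ℝ (ℝ × ℝ × ℝ)) p := hasFDerivAt_fst
  have hy : HasFDerivAt (fun q : ℝ × ℝ × ℝ × ℝ => q.2.1)
      ((ContinuousLinearMap.fst ℝ ℝ (ℝ × ℝ)).comp
        (ContinuousLinearMap.snd ℝ ℝ (ℝ × ℝ × ℝ))) p :=
    hasFDerivAt_fst.comp p hasFDerivAt_snd
  have hz : HasFDerivAt (fun q : ℝ × ℝ × ℝ × ℝ => q.2.2.1)
      (((ContinuousLinearMap.fst ℝ ℝ ℝ).comp
        (ContinuousLinearMap.snd ℝ ℝ (ℝ × ℝ))).comp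
        (ContinuousLinearMap.snd ℝ ℝ (ℝ × ℝ × ℝ))) p :=
    (hasFDerivAt_fst.comp p.2 hasFDerivAt_snd).comp p hasFDerivAt_snd
  have hw : HasFDerivAt (fun q : ℝ × ℝ × ℝ × ℝ => q.2.2.2)
      (((ContinuousLinearMap.snd ℝ ℝ ℝ).comp
        (ContinuousLinearMap.snd ℝ ℝ (ℝ × ℝ))).comp
        (ContinuousLinearMap.snd ℝ ℝ (ℝ × ℝ × ℝ))) p :=
    (hasFDerivAt_snd.comp p.2 hasFDerivAt_snd).comp p hasFDerivAt_snd
  have hN := (((hx.mul hx).add (hy.mul hy)).add (hz.mul hz)).add (hw.mul hw)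
  have hD := (((hx.const_mul (2 * c0)).add (hy.const_mul (2 * c1))).sub_const
      (c0 ^ 2)).sub_const (c1 ^ 2)
  have hInv := ((hasDerivAt_inv hp).comp_hasFDerivAt p hD)
  have hHd := hN.mul hInv
  rw [hH]
  simp only [Function.comp_def, pow_two, Pi.mul_def, Pi.add_def] at hHd
  simp only [pow_two, div_eq_mul_inv]
  rw [hHd.fderiv, hV]
  simp only [ContinuousLinearMap.smul_apply, ContinuousLinearMap.sub_apply,
    ContinuousLinearMap.add_apply, ContinuousLinearMap.comp_apply,
    ContinuousLinearMap.coe_fst', ContinuousLinearMap.coe_snd',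
    ContinuousLinearMap.smulRight_apply, ContinuousLinearMap.one_apply,
    smul_eq_mul]
  subst hc0
  have hp2 : 2 * c1 * p.2.1 - c1 * c1 ≠ 0 := by
    rw [show (2 * c1 * p.2.1 - c1 * c1 : ℝ) = 2 * 0 * p.1 + 2 * c1 * p.2.1 - 0 ^ 2 - c1 ^ 2 by ring]
    exact hp
  simp only [zero_mul, mul_zero, zero_add, add_zero, sub_zero, zero_sub, zero_pow,
    ne_eq, OfNat.ofNat_ne_zero, not_false_eq_true, zero_smul, smul_zero]
  field_simp [hp2]
  ring
end

section
/- Consider the vector field on ℝ^4: q0' = -c1 q1 - q0^2 + q1^2 + q2^2 + q3^2, q1' = c1 q0 - 2q0 q1, q2' = -2q0 q2 - c1 q3, q3' = c1 q2 - 2q0 q3 (c1 ∈ ℝ nonzero). Then F(q) = (q0^2+q1^2+q2^2+q3^2)^2 / ((2q1 - c1)^2 + 4q2^2 + 4q3^2) is a first integral on the set where the denominator is nonzero. -/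
/-- For the component form of `q' = (c1 i) q - q²` with `c1 ≠ 0`,
`F = (q0²+q1²+q2²+q3²)² / ((2q1 - c1)² + 4q2² + 4q3²)` is a first integral
where the denominator is nonzero. -/
theorem F_first_integral_riccati (c1 : ℝ) (hc1 : c1 ≠ 0)
    (V : ℝ × ℝ × ℝ × ℝ → ℝ × ℝ × ℝ × ℝ)
    (hV : V = fun p =>
      (-(c1 * p.2.1) - p.1 ^ 2 + p.2.1 ^ 2 + p.2.2.1 ^ 2 + p.2.2.2 ^ 2,
       c1 * p.1 - 2 * p.1 * p.2.1,
       -(2 * p.1 * p.2.2.1) - c1 * p.2.2.2,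
       c1 * p.2.2.1 - 2 * p.1 * p.2.2.2))
    (F : ℝ × ℝ × ℝ × ℝ → ℝ)
    (hF : F = fun p =>
      (p.1 ^ 2 + p.2.1 ^ 2 + p.2.2.1 ^ 2 + p.2.2.2 ^ 2) ^ 2 /
        ((2 * p.2.1 - c1) ^ 2 + 4 * p.2.2.1 ^ 2 + 4 * p.2.2.2 ^ 2))
    (p : ℝ × ℝ × ℝ × ℝ)
    (hp : (2 * p.2.1 - c1) ^ 2 + 4 * p.2.2.1 ^ 2 + 4 * p.2.2.2 ^ 2 ≠ 0) :
    fderiv ℝ F p (V p) = 0 := by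
  subst hV hF
  obtain ⟨a, b, c, d⟩ := p
  simp only at hp ⊢
  set v0 : ℝ := -(c1 * b) - a ^ 2 + b ^ 2 + c ^ 2 + d ^ 2 with hv0
  set v1 : ℝ := c1 * a - 2 * a * b with hv1
  set v2 : ℝ := -(2 * a * c) - c1 * d with hv2
  set v3 : ℝ := c1 * c - 2 * a * d with hv3
  set P : ℝ × ℝ × ℝ × ℝ := (a, b, c, d) with hP
  set F0 : ℝ × ℝ × ℝ × ℝ → ℝ := fun p =>
      (p.1 ^ 2 + p.2.1 ^ 2 + p.2.2.1 ^ 2 + p.2.2.2 ^ 2) ^ 2 /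
        ((2 * p.2.1 - c1) ^ 2 + 4 * p.2.2.1 ^ 2 + 4 * p.2.2.2 ^ 2) with hF0
  -- line through P with direction v
  set L : ℝ → ℝ × ℝ × ℝ × ℝ := fun t => (a + t * v0, b + t * v1, c + t * v2, d + t * v3) with hL
  have hline : HasDerivAt L ((v0, v1, v2, v3) : ℝ × ℝ × ℝ × ℝ) 0 := by
    have h0 : HasDerivAt (fun t : ℝ => a + t * v0) v0 0 := by
      simpa using ((hasDerivAt_id (0:ℝ)).mul_const v0).const_add a
    have h1 : HasDerivAt (fun t : ℝ => b + t * v1) v1 0 := by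
      simpa using ((hasDerivAt_id (0:ℝ)).mul_const v1).const_add b
    have h2 : HasDerivAt (fun t : ℝ => c + t * v2) v2 0 := by
      simpa using ((hasDerivAt_id (0:ℝ)).mul_const v2).const_add c
    have h3 : HasDerivAt (fun t : ℝ => d + t * v3) v3 0 := by
      simpa using ((hasDerivAt_id (0:ℝ)).mul_const v3).const_add d
    exact h0.prodMk (h1.prodMk (h2.prodMk h3))
  have hL0 : L 0 = P := by simp [hL, hP]
  have hNdiff : DifferentiableAt ℝ (fun p : ℝ × ℝ × ℝ × ℝ =>
      (p.1 ^ 2 + p.2.1 ^ 2 + p.2.2.1 ^ 2 + p.2.2.2 ^ 2) ^ 2) P := by fun_prop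
  have hDdiff : DifferentiableAt ℝ (fun p : ℝ × ℝ × ℝ × ℝ =>
      (2 * p.2.1 - c1) ^ 2 + 4 * p.2.2.1 ^ 2 + 4 * p.2.2.2 ^ 2) P := by fun_prop
  have hp' : (2 * P.2.1 - c1) ^ 2 + 4 * P.2.2.1 ^ 2 + 4 * P.2.2.2 ^ 2 ≠ 0 := by
    simpa [hP] using hp
  have hFdiff : DifferentiableAt ℝ F0 P := by
    rw [hF0]
    simp only [div_eq_mul_inv]
    exact hNdiff.mul (hDdiff.inv hp')
  have hcomp : HasDerivAt (fun t => F0 (L t)) (fderiv ℝ F0 P (v0, v1, v2, v3)) 0 := by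
    have h := (hL0 ▸ hFdiff.hasFDerivAt : HasFDerivAt F0 (fderiv ℝ F0 P) (L 0)).comp_hasDerivAt 0 hline
    exact h
  -- direct computation of the same derivative
  have h0 : HasDerivAt (fun t : ℝ => a + t * v0) v0 0 := by
    simpa using ((hasDerivAt_id (0:ℝ)).mul_const v0).const_add a
  have h1 : HasDerivAt (fun t : ℝ => b + t * v1) v1 0 := by
    simpa using ((hasDerivAt_id (0:ℝ)).mul_const v1).const_add b
  have h2 : HasDerivAt (fun t : ℝ => c + t * v2) v2 0 := by
    simpa using ((hasDerivAt_id (0:ℝ)).mul_const v2).const_add c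
  have h3 : HasDerivAt (fun t : ℝ => d + t * v3) v3 0 := by
    simpa using ((hasDerivAt_id (0:ℝ)).mul_const v3).const_add d
  have hn : HasDerivAt (fun t : ℝ =>
      ((a + t * v0) ^ 2 + (b + t * v1) ^ 2 + (c + t * v2) ^ 2 + (d + t * v3) ^ 2) ^ 2)
      (2 * ((a + 0 * v0) ^ 2 + (b + 0 * v1) ^ 2 + (c + 0 * v2) ^ 2 + (d + 0 * v3) ^ 2) ^ 1 *
        (2 * (a + 0 * v0) ^ 1 * v0 + 2 * (b + 0 * v1) ^ 1 * v1 + 2 * (c + 0 * v2) ^ 1 * v2 +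
          2 * (d + 0 * v3) ^ 1 * v3)) 0 := by
    exact ((((h0.pow 2).add (h1.pow 2)).add (h2.pow 2)).add (h3.pow 2)).pow 2
  have hd' : HasDerivAt (fun t : ℝ =>
      (2 * (b + t * v1) - c1) ^ 2 + 4 * (c + t * v2) ^ 2 + 4 * (d + t * v3) ^ 2)
      ((2 * (2 * (b + 0 * v1) - c1) ^ 1 * (2 * v1) + 4 * (2 * (c + 0 * v2) ^ 1 * v2)) +
        4 * (2 * (d + 0 * v3) ^ 1 * v3)) 0 := by
    have hb : HasDerivAt (fun t : ℝ => 2 * (b + t * v1) - c1) (2 * v1) 0 :=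
      (h1.const_mul 2).sub_const c1
    exact (((hb.pow 2).add ((h2.pow 2).const_mul 4)).add ((h3.pow 2).const_mul 4))
  have hdval : (2 * (b + (0:ℝ) * v1) - c1) ^ 2 + 4 * (c + 0 * v2) ^ 2 + 4 * (d + 0 * v3) ^ 2 ≠ 0 := by
    simpa using hp
  have hdiv := hn.div hd' hdval
  have hdirect : HasDerivAt (fun t => F0 (L t))
      ((2 * ((a + 0 * v0) ^ 2 + (b + 0 * v1) ^ 2 + (c + 0 * v2) ^ 2 + (d + 0 * v3) ^ 2) ^ 1 *
        (2 * (a + 0 * v0) ^ 1 * v0 + 2 * (b + 0 * v1) ^ 1 * v1 + 2 * (c + 0 * v2) ^ 1 * v2 +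
          2 * (d + 0 * v3) ^ 1 * v3) *
        ((2 * (b + 0 * v1) - c1) ^ 2 + 4 * (c + 0 * v2) ^ 2 + 4 * (d + 0 * v3) ^ 2) -
        ((a + 0 * v0) ^ 2 + (b + 0 * v1) ^ 2 + (c + 0 * v2) ^ 2 + (d + 0 * v3) ^ 2) ^ 2 *
        ((2 * (2 * (b + 0 * v1) - c1) ^ 1 * (2 * v1) + 4 * (2 * (c + 0 * v2) ^ 1 * v2)) +
          4 * (2 * (d + 0 * v3) ^ 1 * v3))) /
        ((2 * (b + 0 * v1) - c1) ^ 2 + 4 * (c + 0 * v2) ^ 2 + 4 * (d + 0 * v3) ^ 2) ^ 2) 0 := by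
    exact hdiv
  have key : fderiv ℝ F0 P (v0, v1, v2, v3) =
      ((2 * ((a + 0 * v0) ^ 2 + (b + 0 * v1) ^ 2 + (c + 0 * v2) ^ 2 + (d + 0 * v3) ^ 2) ^ 1 *
        (2 * (a + 0 * v0) ^ 1 * v0 + 2 * (b + 0 * v1) ^ 1 * v1 + 2 * (c + 0 * v2) ^ 1 * v2 +
          2 * (d + 0 * v3) ^ 1 * v3) *
        ((2 * (b + 0 * v1) - c1) ^ 2 + 4 * (c + 0 * v2) ^ 2 + 4 * (d + 0 * v3) ^ 2) -
        ((a + 0 * v0) ^ 2 + (b + 0 * v1) ^ 2 + (c + 0 * v2) ^ 2 + (d + 0 * v3) ^ 2) ^ 2 *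
        ((2 * (2 * (b + 0 * v1) - c1) ^ 1 * (2 * v1) + 4 * (2 * (c + 0 * v2) ^ 1 * v2)) +
          4 * (2 * (d + 0 * v3) ^ 1 * v3))) /
        ((2 * (b + 0 * v1) - c1) ^ 2 + 4 * (c + 0 * v2) ^ 2 + 4 * (d + 0 * v3) ^ 2) ^ 2) :=
    hcomp.unique hdirect
  rw [key]
  rw [div_eq_zero_iff]
  left
  simp only [hv0, hv1, hv2, hv3]
  ring
end

section
/- Consider the vector field on ℝ^4: q0' = a1 q1 A - a0 q0 B, q1' = -a0 q1 A - a1 q0 B, q2' = -(a0 q2 - a1 q3) A, q3' = -(a1 q2 + a0 q3) A, where A = c0^2 - 3q0^2 + q1^2+q2^2+q3^2 and B = c0^2 - q0^2 + 3(q1^2+q2^2+q3^2). With L(q) = q0^2 - q1^2 - q2^2 - q3^2 - c0^2/2, at every point where L(q) = 0 the derivative of L along the vector field equals -2 a0 (2q0^2 - c0^2/2)^2. -/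
/-- For the component form of the cubic quaternion equation
`q' = a(q - c0)(q + c0)q` with `a = a0 + a1 i`, at every point of the quadric
`L = q0² - q1² - q2² - q3² - c0²/2 = 0`, the derivative of `L` along the
vector field equals `-2 a0 (2q0² - c0²/2)²`. -/
theorem L_derivative_cubic (a0 a1 c0 : ℝ)
    (A B : ℝ × ℝ × ℝ × ℝ → ℝ)
    (hA : A = fun p => c0 ^ 2 - 3 * p.1 ^ 2 + p.2.1 ^ 2 + p.2.2.1 ^ 2 + p.2.2.2 ^ 2)
    (hB : B = fun p => c0 ^ 2 - p.1 ^ 2 + 3 * (p.2.1 ^ 2 + p.2.2.1 ^ 2 + p.2.2.2 ^ 2))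
    (V : ℝ × ℝ × ℝ × ℝ → ℝ × ℝ × ℝ × ℝ)
    (hV : V = fun p =>
      (a1 * p.2.1 * A p - a0 * p.1 * B p,
       -(a0 * p.2.1 * A p) - a1 * p.1 * B p,
       -((a0 * p.2.2.1 - a1 * p.2.2.2) * A p),
       -((a1 * p.2.2.1 + a0 * p.2.2.2) * A p)))
    (L : ℝ × ℝ × ℝ × ℝ → ℝ)
    (hL : L = fun p => p.1 ^ 2 - p.2.1 ^ 2 - p.2.2.1 ^ 2 - p.2.2.2 ^ 2 - c0 ^ 2 / 2)
    (p : ℝ × ℝ × ℝ × ℝ) (hp : L p = 0) :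
    fderiv ℝ L p (V p) = -2 * a0 * (2 * p.1 ^ 2 - c0 ^ 2 / 2) ^ 2 := by
  have h1 : HasFDerivAt (fun q : ℝ × ℝ × ℝ × ℝ => q.1)
      (ContinuousLinearMap.fst ℝ ℝ (ℝ × ℝ × ℝ)) p := hasFDerivAt_fst
  have hs : HasFDerivAt (fun q : ℝ × ℝ × ℝ × ℝ => q.2)
      (ContinuousLinearMap.snd ℝ ℝ (ℝ × ℝ × ℝ)) p := hasFDerivAt_snd
  have h2 : HasFDerivAt (fun q : ℝ × ℝ × ℝ × ℝ => q.2.1)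
      ((ContinuousLinearMap.fst ℝ ℝ (ℝ × ℝ)).comp
        (ContinuousLinearMap.snd ℝ ℝ (ℝ × ℝ × ℝ))) p :=
    hasFDerivAt_fst.comp p hs
  have hss : HasFDerivAt (fun q : ℝ × ℝ × ℝ × ℝ => q.2.2)
      ((ContinuousLinearMap.snd ℝ ℝ (ℝ × ℝ)).comp
        (ContinuousLinearMap.snd ℝ ℝ (ℝ × ℝ × ℝ))) p :=
    hasFDerivAt_snd.comp p hs
  have h3 : HasFDerivAt (fun q : ℝ × ℝ × ℝ × ℝ => q.2.2.1)
      ((ContinuousLinearMap.fst ℝ ℝ ℝ).comp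
        ((ContinuousLinearMap.snd ℝ ℝ (ℝ × ℝ)).comp
          (ContinuousLinearMap.snd ℝ ℝ (ℝ × ℝ × ℝ)))) p :=
    hasFDerivAt_fst.comp p hss
  have h4 : HasFDerivAt (fun q : ℝ × ℝ × ℝ × ℝ => q.2.2.2)
      ((ContinuousLinearMap.snd ℝ ℝ ℝ).comp
        ((ContinuousLinearMap.snd ℝ ℝ (ℝ × ℝ)).comp
          (ContinuousLinearMap.snd ℝ ℝ (ℝ × ℝ × ℝ)))) p :=
    hasFDerivAt_snd.comp p hss
  have hLd : HasFDerivAt L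
      ((((p.1 • ContinuousLinearMap.fst ℝ ℝ (ℝ × ℝ × ℝ) +
          p.1 • ContinuousLinearMap.fst ℝ ℝ (ℝ × ℝ × ℝ)) -
        (p.2.1 • ((ContinuousLinearMap.fst ℝ ℝ (ℝ × ℝ)).comp
            (ContinuousLinearMap.snd ℝ ℝ (ℝ × ℝ × ℝ))) +
         p.2.1 • ((ContinuousLinearMap.fst ℝ ℝ (ℝ × ℝ)).comp
            (ContinuousLinearMap.snd ℝ ℝ (ℝ × ℝ × ℝ))))) -
        (p.2.2.1 • ((ContinuousLinearMap.fst ℝ ℝ ℝ).comp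
            ((ContinuousLinearMap.snd ℝ ℝ (ℝ × ℝ)).comp
              (ContinuousLinearMap.snd ℝ ℝ (ℝ × ℝ × ℝ)))) +
         p.2.2.1 • ((ContinuousLinearMap.fst ℝ ℝ ℝ).comp
            ((ContinuousLinearMap.snd ℝ ℝ (ℝ × ℝ)).comp
              (ContinuousLinearMap.snd ℝ ℝ (ℝ × ℝ × ℝ)))))) -
        (p.2.2.2 • ((ContinuousLinearMap.snd ℝ ℝ ℝ).comp
            ((ContinuousLinearMap.snd ℝ ℝ (ℝ × ℝ)).comp
              (ContinuousLinearMap.snd ℝ ℝ (ℝ × ℝ × ℝ)))) +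
         p.2.2.2 • ((ContinuousLinearMap.snd ℝ ℝ ℝ).comp
            ((ContinuousLinearMap.snd ℝ ℝ (ℝ × ℝ)).comp
              (ContinuousLinearMap.snd ℝ ℝ (ℝ × ℝ × ℝ)))))) p := by
    have hL' : L = fun q : ℝ × ℝ × ℝ × ℝ =>
        q.1 * q.1 - q.2.1 * q.2.1 - q.2.2.1 * q.2.2.1 - q.2.2.2 * q.2.2.2 - c0 ^ 2 / 2 := by
      rw [hL]; funext q; ring
    rw [hL']
    exact ((((h1.mul h1).sub (h2.mul h2)).sub (h3.mul h3)).sub (h4.mul h4)).sub_const _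
  rw [hLd.fderiv]
  rw [hL] at hp
  simp only [hV, hA, hB, ContinuousLinearMap.sub_apply, ContinuousLinearMap.add_apply, ContinuousLinearMap.smul_apply,
    ContinuousLinearMap.coe_comp', Function.comp_apply, ContinuousLinearMap.coe_fst',
    ContinuousLinearMap.coe_snd', smul_eq_mul, pow_one, Nat.cast_ofNat]
  linear_combination (2 * a0 * (p.1 ^ 2 - p.2.1 ^ 2 - p.2.2.1 ^ 2 - p.2.2.2 ^ 2 - c0 ^ 2 / 2)
    + 8 * a0 * p.1 ^ 2 - 8 * a1 * p.1 * p.2.1) * hp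
end

section
/- Consider the vector field on ℝ^4 given by the cubic quaternion equation q' = a(q-c0)(q+c0)q with a = a0 + a1 i (component form as in the paper) and let H(q) = (q0^2+q1^2+q2^2+q3^2)^2 / (q0^2 - q1^2 - q2^2 - q3^2 - c0^2/2). Then dH/dt = 8 a0 N (q0^2+q1^2+q2^2+q3^2)^2 / (c0^2 - 2(q0^2-q1^2-q2^2-q3^2))^2, where N = c0^4 - 2c0^2(q0^2-q1^2-q2^2-q3^2) + (q0^2+q1^2+q2^2+q3^2)^2. In particular H is a first integral when a0 = 0. -/
private lemma sq_fderiv {E : Type*} [NormedAddCommGroup E] [NormedSpace ℝ E]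
    {f : E → ℝ} {f' : E →L[ℝ] ℝ} {x : E} (hf : HasFDerivAt f f' x) :
    HasFDerivAt (fun y => f y ^ 2) ((2 * f x) • f') x := by
  have h := hf.mul hf
  have e : (2 * f x) • f' = f x • f' + f x • f' := by rw [two_mul, add_smul]
  rw [e]
  simpa only [pow_two, Pi.mul_def] using h


set_option maxHeartbeats 2000000


/-- For the component form of the cubic quaternion equation
`q' = a(q - c0)(q + c0)q` with `a = a0 + a1 i`, the function
`H = (q0²+q1²+q2²+q3²)² / (q0²-q1²-q2²-q3² - c0²/2)` satisfies
`dH/dt = 8 a0 N (q0²+q1²+q2²+q3²)² / (c0² - 2(q0²-q1²-q2²-q3²))²` where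
`N = c0⁴ - 2c0²(q0²-q1²-q2²-q3²) + (q0²+q1²+q2²+q3²)²`. In particular `H` is a
first integral when `a0 = 0`. -/
theorem H_derivative_cubic (a0 a1 c0 : ℝ)
    (A B : ℝ × ℝ × ℝ × ℝ → ℝ)
    (hA : A = fun p => c0 ^ 2 - 3 * p.1 ^ 2 + p.2.1 ^ 2 + p.2.2.1 ^ 2 + p.2.2.2 ^ 2)
    (hB : B = fun p => c0 ^ 2 - p.1 ^ 2 + 3 * (p.2.1 ^ 2 + p.2.2.1 ^ 2 + p.2.2.2 ^ 2))
    (V : ℝ × ℝ × ℝ × ℝ → ℝ × ℝ × ℝ × ℝ)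
    (hV : V = fun p =>
      (a1 * p.2.1 * A p - a0 * p.1 * B p,
       -(a0 * p.2.1 * A p) - a1 * p.1 * B p,
       -((a0 * p.2.2.1 - a1 * p.2.2.2) * A p),
       -((a1 * p.2.2.1 + a0 * p.2.2.2) * A p)))
    (H N : ℝ × ℝ × ℝ × ℝ → ℝ)
    (hH : H = fun p =>
      (p.1 ^ 2 + p.2.1 ^ 2 + p.2.2.1 ^ 2 + p.2.2.2 ^ 2) ^ 2 /
        (p.1 ^ 2 - p.2.1 ^ 2 - p.2.2.1 ^ 2 - p.2.2.2 ^ 2 - c0 ^ 2 / 2))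
    (hN : N = fun p =>
      c0 ^ 4 - 2 * c0 ^ 2 * (p.1 ^ 2 - p.2.1 ^ 2 - p.2.2.1 ^ 2 - p.2.2.2 ^ 2) +
        (p.1 ^ 2 + p.2.1 ^ 2 + p.2.2.1 ^ 2 + p.2.2.2 ^ 2) ^ 2)
    (p : ℝ × ℝ × ℝ × ℝ)
    (hp : p.1 ^ 2 - p.2.1 ^ 2 - p.2.2.1 ^ 2 - p.2.2.2 ^ 2 - c0 ^ 2 / 2 ≠ 0) :
    fderiv ℝ H p (V p) =
      8 * a0 * N p * (p.1 ^ 2 + p.2.1 ^ 2 + p.2.2.1 ^ 2 + p.2.2.2 ^ 2) ^ 2 /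
        (c0 ^ 2 - 2 * (p.1 ^ 2 - p.2.1 ^ 2 - p.2.2.1 ^ 2 - p.2.2.2 ^ 2)) ^ 2 ∧
    (a0 = 0 → fderiv ℝ H p (V p) = 0) := by
  subst hA hB hV hH hN
  have hx : HasFDerivAt (fun p : ℝ × ℝ × ℝ × ℝ => p.1)
      (ContinuousLinearMap.fst ℝ ℝ (ℝ × ℝ × ℝ)) p := hasFDerivAt_fst
  have h2 : HasFDerivAt (fun p : ℝ × ℝ × ℝ × ℝ => p.2)
      (ContinuousLinearMap.snd ℝ ℝ (ℝ × ℝ × ℝ)) p := hasFDerivAt_snd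
  have hy : HasFDerivAt (fun p : ℝ × ℝ × ℝ × ℝ => p.2.1)
      ((ContinuousLinearMap.fst ℝ ℝ (ℝ × ℝ)).comp (ContinuousLinearMap.snd ℝ ℝ (ℝ × ℝ × ℝ))) p :=
    (hasFDerivAt_fst).comp p h2
  have h22 : HasFDerivAt (fun p : ℝ × ℝ × ℝ × ℝ => p.2.2)
      ((ContinuousLinearMap.snd ℝ ℝ (ℝ × ℝ)).comp (ContinuousLinearMap.snd ℝ ℝ (ℝ × ℝ × ℝ))) p :=
    (hasFDerivAt_snd).comp p h2
  have hz : HasFDerivAt (fun p : ℝ × ℝ × ℝ × ℝ => p.2.2.1) _ p := (hasFDerivAt_fst).comp p h22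
  have hw : HasFDerivAt (fun p : ℝ × ℝ × ℝ × ℝ => p.2.2.2) _ p := (hasFDerivAt_snd).comp p h22
  have hf : HasFDerivAt (fun p : ℝ × ℝ × ℝ × ℝ =>
      (p.1 ^ 2 + p.2.1 ^ 2 + p.2.2.1 ^ 2 + p.2.2.2 ^ 2) ^ 2) _ p :=
    sq_fderiv ((((sq_fderiv hx).add (sq_fderiv hy)).add (sq_fderiv hz)).add (sq_fderiv hw))
  have hg : HasFDerivAt (fun p : ℝ × ℝ × ℝ × ℝ =>
      p.1 ^ 2 - p.2.1 ^ 2 - p.2.2.1 ^ 2 - p.2.2.2 ^ 2 - c0 ^ 2 / 2) _ p :=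
    ((((sq_fderiv hx).sub (sq_fderiv hy)).sub (sq_fderiv hz)).sub (sq_fderiv hw)).sub_const (c0 ^ 2 / 2)
  have hinv : HasFDerivAt (fun q : ℝ × ℝ × ℝ × ℝ =>
      (q.1 ^ 2 - q.2.1 ^ 2 - q.2.2.1 ^ 2 - q.2.2.2 ^ 2 - c0 ^ 2 / 2)⁻¹) _ p :=
    (hasDerivAt_inv hp).comp_hasFDerivAt p hg
  have hHd : HasFDerivAt (fun q : ℝ × ℝ × ℝ × ℝ =>
      (q.1 ^ 2 + q.2.1 ^ 2 + q.2.2.1 ^ 2 + q.2.2.2 ^ 2) ^ 2 *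
        (q.1 ^ 2 - q.2.1 ^ 2 - q.2.2.1 ^ 2 - q.2.2.2 ^ 2 - c0 ^ 2 / 2)⁻¹) _ p := hf.mul hinv
  have hden : c0 ^ 2 - 2 * (p.1 ^ 2 - p.2.1 ^ 2 - p.2.2.1 ^ 2 - p.2.2.2 ^ 2) ≠ 0 := by
    intro h
    apply hp
    linarith
  obtain ⟨x, y, z, w⟩ := p
  have heq : (fun q : ℝ × ℝ × ℝ × ℝ =>
      (q.1 ^ 2 + q.2.1 ^ 2 + q.2.2.1 ^ 2 + q.2.2.2 ^ 2) ^ 2 /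
        (q.1 ^ 2 - q.2.1 ^ 2 - q.2.2.1 ^ 2 - q.2.2.2 ^ 2 - c0 ^ 2 / 2)) = (fun q : ℝ × ℝ × ℝ × ℝ =>
      (q.1 ^ 2 + q.2.1 ^ 2 + q.2.2.1 ^ 2 + q.2.2.2 ^ 2) ^ 2 *
        (q.1 ^ 2 - q.2.1 ^ 2 - q.2.2.1 ^ 2 - q.2.2.2 ^ 2 - c0 ^ 2 / 2)⁻¹) := by
    funext q; rw [div_eq_mul_inv]
  simp only at hp hden ⊢
  rw [heq, hHd.fderiv]
  simp only [ContinuousLinearMap.smul_apply, ContinuousLinearMap.sub_apply,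
    ContinuousLinearMap.add_apply, ContinuousLinearMap.comp_apply,
    ContinuousLinearMap.smulRight_apply, ContinuousLinearMap.coe_fst',
    ContinuousLinearMap.coe_snd', ContinuousLinearMap.one_apply, smul_eq_mul]
  constructor
  · rw [eq_div_iff (pow_ne_zero 2 hden)]
    set d := x ^ 2 - y ^ 2 - z ^ 2 - w ^ 2 - c0 ^ 2 / 2 with hd
    field_simp
    rw [hd]
    ring
  · intro h0
    subst h0
    set d := x ^ 2 - y ^ 2 - z ^ 2 - w ^ 2 - c0 ^ 2 / 2 with hd
    field_simp
    rw [hd]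
    ring
end
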